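/- Let Ω ⊂ ℝ² be a nonempty bounded open set and let C₀ > 0. Suppose G, defined for pairs (x,y) ∈ Ω × Ω with x ≠ y, satisfies: (a) for every x ∈ Ω the function y ↦ G(x,y) is harmonic on Ω \ {x} (hence smooth there, so its gradient ∇_y G(x,y) exists); (b) |G(x,y)| ≤ |ln|x−y|| + |ln diam(Ω)| for all x ≠ y; (c) |G(x,y)| ≤ C₀·(1 + |ln|x−y||)·δ(y)/|x−y| for all x ≠ y. Then there exists a constant C > 0, depending only on C₀ and diam(Ω), such that |∇_y G(x,y)| ≤ C·(1 + |ln|x−y||)/|x−y| for all x, y ∈ Ω with x ≠ y. (From part (v) of Theorem 3.1, n = 2.) -/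

import Mathlib

open Metric MeasureTheory

/-- The Euclidean Laplacian of a real-valued function on `ℝ²`. -/
noncomputable def laplacianR (u : EuclideanSpace ℝ (Fin 2) → ℝ)
    (x : EuclideanSpace ℝ (Fin 2)) : ℝ :=
  ∑ i : Fin 2,
    fderiv ℝ (fun y => fderiv ℝ u y (EuclideanSpace.single i 1)) x (EuclideanSpace.single i 1)

/-- `u` is harmonic on `U`: twice continuously differentiable with vanishing Laplacian. -/
def HarmonicOnR (u : EuclideanSpace ℝ (Fin 2) → ℝ)
    (U : Set (EuclideanSpace ℝ (Fin 2))) : Prop :=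
  ContDiffOn ℝ 2 u U ∧ ∀ x ∈ U, laplacianR u x = 0


section helpers

open Complex intervalIntegral Set.Notation

noncomputable def fcplx (v : ℂ → ℝ) (z : ℂ) : ℂ :=
  (fderiv ℝ v z 1 : ℝ) - (fderiv ℝ v z Complex.I : ℝ) * Complex.I

lemma clm_decomp (L : ℂ →L[ℝ] ℝ) (w : ℂ) : L w = w.re * L 1 + w.im * L Complex.I := by
  have hw : w = w.re • (1:ℂ) + w.im • Complex.I := by
    simp [Complex.real_smul, Complex.re_add_im]
  calc L w = L (w.re • (1:ℂ) + w.im • Complex.I) := by rw [← hw]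
    _ = w.re * L 1 + w.im * L Complex.I := by
        rw [map_add, _root_.map_smul, _root_.map_smul]; simp [smul_eq_mul]

lemma fcplx_spec (v : ℂ → ℝ) (z w : ℂ) :
    fderiv ℝ v z w = (fcplx v z * w).re := by
  rw [clm_decomp (fderiv ℝ v z) w]
  simp [fcplx, Complex.mul_re]
  ring

lemma fcplx_holo {V : Set ℂ} (hV : IsOpen V) {v : ℂ → ℝ} (hv : ContDiffOn ℝ 2 v V)
    (hlap : ∀ z ∈ V, fderiv ℝ (fun w => fderiv ℝ v w 1) z 1
      + fderiv ℝ (fun w => fderiv ℝ v w Complex.I) z Complex.I = 0)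
    {z : ℂ} (hz : z ∈ V) : DifferentiableAt ℂ (fcplx v) z := by
  have hd1 : ∀ w ∈ V, DifferentiableAt ℝ v w := fun w hw =>
    ((hv.differentiableOn (by norm_num)) w hw).differentiableAt (hV.mem_nhds hw)
  have hfd : ContDiffOn ℝ 1 (fderiv ℝ v) V := hv.fderiv_of_isOpen hV (by norm_num)
  have hBd : DifferentiableAt ℝ (fderiv ℝ v) z :=
    ((hfd.differentiableOn (by norm_num)) z hz).differentiableAt (hV.mem_nhds hz)
  set B := fderiv ℝ (fderiv ℝ v) z with hBdef
  have hB : HasFDerivAt (fderiv ℝ v) B z := hBd.hasFDerivAt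
  have hsymm : ∀ a b : ℂ, B a b = B b a := by
    intro a b
    exact second_derivative_symmetric_of_eventually
      (by filter_upwards [hV.eventually_mem hz] with w hw using (hd1 w hw).hasFDerivAt) hB a b
  -- Laplace at z in terms of B
  have e1 : fderiv ℝ (fun w => fderiv ℝ v w 1) z = B.flip 1 := by
    have := fderiv_clm_apply (c := fderiv ℝ v) (u := fun _ => (1:ℂ)) hBd (differentiableAt_const _)
    simpa using this
  have e2 : fderiv ℝ (fun w => fderiv ℝ v w Complex.I) z = B.flip Complex.I := by
    have := fderiv_clm_apply (c := fderiv ℝ v) (u := fun _ => (Complex.I)) hBd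
      (differentiableAt_const _)
    simpa using this
  have hlapz : B 1 1 + B Complex.I Complex.I = 0 := by
    have := hlap z hz
    rw [e1, e2] at this
    simpa using this
  -- real derivative of fcplx v at z
  have ha : HasFDerivAt (fun w => fderiv ℝ v w (1:ℂ))
      ((ContinuousLinearMap.apply ℝ ℝ (1:ℂ)).comp B) z :=
    (ContinuousLinearMap.apply ℝ ℝ (1:ℂ)).hasFDerivAt.comp z hB
  have hb : HasFDerivAt (fun w => fderiv ℝ v w Complex.I)
      ((ContinuousLinearMap.apply ℝ ℝ (Complex.I)).comp B) z :=
    (ContinuousLinearMap.apply ℝ ℝ (Complex.I)).hasFDerivAt.comp z hB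
  have hD : HasFDerivAt (fcplx v)
      ((Complex.ofRealCLM.comp ((ContinuousLinearMap.apply ℝ ℝ (1:ℂ)).comp B))
        - Complex.I • (Complex.ofRealCLM.comp ((ContinuousLinearMap.apply ℝ ℝ (Complex.I)).comp B))) z := by
    have h1 : HasFDerivAt (fun w => ((fderiv ℝ v w (1:ℂ) : ℝ) : ℂ))
        (Complex.ofRealCLM.comp ((ContinuousLinearMap.apply ℝ ℝ (1:ℂ)).comp B)) z :=
      Complex.ofRealCLM.hasFDerivAt.comp z ha
    have h2 : HasFDerivAt (fun w => ((fderiv ℝ v w Complex.I : ℝ) : ℂ))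
        (Complex.ofRealCLM.comp ((ContinuousLinearMap.apply ℝ ℝ (Complex.I)).comp B)) z :=
      Complex.ofRealCLM.hasFDerivAt.comp z hb
    have h2' := h2.const_mul Complex.I
    have h3 := h1.sub h2'
    have heq : fcplx v = fun x => ((fderiv ℝ v x (1:ℂ) : ℝ) : ℂ)
        - Complex.I * ((fderiv ℝ v x Complex.I : ℝ) : ℂ) := by
      funext w; simp [fcplx]; ring
    rw [heq]; exact h3
  -- complex linearity
  set c : ℂ := B 1 1 - B 1 Complex.I * Complex.I with hc
  have hL : HasFDerivAt (fcplx v) ((ContinuousLinearMap.id ℂ ℂ).smulRight c) z := by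
    apply hasFDerivAt_of_restrictScalars (𝕜 := ℝ) hD
    ext w
    show w • c = _
    have hw : w = w.re • (1:ℂ) + w.im • Complex.I := by
      simp [Complex.real_smul, Complex.re_add_im]
    have hB1 : B w 1 = w.re * B 1 1 + w.im * B Complex.I 1 := by
      conv_lhs => rw [hw]
      rw [map_add, _root_.map_smul, _root_.map_smul]; simp [smul_eq_mul]
    have hBI : B w Complex.I = w.re * B 1 Complex.I + w.im * B Complex.I Complex.I := by
      conv_lhs => rw [hw]
      rw [map_add, _root_.map_smul, _root_.map_smul]; simp [smul_eq_mul]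
    have hII : B Complex.I Complex.I = - B 1 1 := by linarith [hlapz]
    have hI1 : B Complex.I 1 = B 1 Complex.I := hsymm _ _
    simp only [ContinuousLinearMap.coe_sub', Pi.sub_apply, ContinuousLinearMap.coe_comp',
      Function.comp_apply, ContinuousLinearMap.coe_smul', Pi.smul_apply,
      Complex.ofRealCLM_apply, ContinuousLinearMap.apply_apply, smul_eq_mul]
    rw [hB1, hBI, hII, hI1, hc]
    apply Complex.ext <;> simp [Complex.mul_re, Complex.mul_im] <;> ring
  exact hL.differentiableAt


lemma my_intervalIntegral_conj {f : ℝ → ℂ} {a b : ℝ} :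
    ∫ x in a..b, (starRingEnd ℂ) (f x) = (starRingEnd ℂ) (∫ x in a..b, f x) := by
  simp [intervalIntegral, integral_conj]

lemma fcplx_center_bound {V : Set ℂ} (hV : IsOpen V) {v : ℂ → ℝ} (hv : ContDiffOn ℝ 2 v V)
    (hholo : ∀ z ∈ V, DifferentiableAt ℂ (fcplx v) z)
    {c : ℂ} {R M : ℝ} (hR : 0 < R) (hsub : closedBall c R ⊆ V)
    (hM : ∀ z ∈ closedBall c R, |v z| ≤ M) :
    ‖fcplx v c‖ ≤ 2 * M / R := by
  have pi_pos := Real.pi_pos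
  set F := fcplx v with hF
  have hmemB : ∀ θ : ℝ, circleMap c R θ ∈ closedBall c R :=
    circleMap_mem_closedBall c hR.le
  have hmemV : ∀ θ : ℝ, circleMap c R θ ∈ V := fun θ => hsub (hmemB θ)
  have hfdiff : ∀ z ∈ closedBall c R, DifferentiableAt ℂ F z := fun z hz => hholo z (hsub hz)
  have hfcont : ContinuousOn F (closedBall c R) :=
    fun z hz => (hfdiff z hz).continuousAt.continuousWithinAt
  have hcm : Continuous (circleMap c R) := continuous_circleMap c R
  have hFc : Continuous fun θ => F (circleMap c R θ) :=
    hfcont.comp_continuous hcm hmemB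
  have hne : ∀ θ : ℝ, circleMap 0 R θ ≠ 0 := fun θ => circleMap_ne_center hR.ne'
  -- mean value property
  have hmean : ∫ θ in (0:ℝ)..(2*Real.pi), F (circleMap c R θ)
      = (2*Real.pi : ℂ) * F c := by
    have H := Complex.two_pi_I_inv_smul_circleIntegral_sub_inv_smul_of_differentiable_on_off_countable
      (s := (∅ : Set ℂ)) Set.countable_empty (Metric.mem_ball_self hR) hfcont
      (fun z hz => hfdiff z (ball_subset_closedBall hz.1))
    have expand : (∮ z in C(c, R), (z - c)⁻¹ • F z)
        = ∫ θ in (0:ℝ)..(2*Real.pi), Complex.I * F (circleMap c R θ) := by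
      rw [circleIntegral]
      apply intervalIntegral.integral_congr
      intro θ _
      simp only [deriv_circleMap, circleMap_sub_center, smul_eq_mul]
      field_simp [hne θ]
    rw [expand, intervalIntegral.integral_const_mul, smul_eq_mul] at H
    have h2πI : (2 * (Real.pi:ℂ) * Complex.I) ≠ 0 := by
      simp [Real.pi_ne_zero, Complex.I_ne_zero, Complex.ofReal_ne_zero]
    rw [inv_mul_eq_iff_eq_mul₀ h2πI] at H
    apply mul_left_cancel₀ Complex.I_ne_zero
    rw [H]; ring
  -- vanishing second moment
  have hzero : ∫ θ in (0:ℝ)..(2*Real.pi),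
      (circleMap 0 R θ)^2 * F (circleMap c R θ) = 0 := by
    have hgc : ContinuousOn (fun z => (z - c) * F z) (closedBall c R) :=
      ((continuousOn_id.sub continuousOn_const).mul hfcont)
    have H := Complex.circleIntegral_eq_zero_of_differentiable_on_off_countable hR.le
      (s := (∅ : Set ℂ)) Set.countable_empty hgc
      (fun z hz => ((differentiableAt_id.sub (differentiableAt_const c)).mul
        (hfdiff z (ball_subset_closedBall hz.1))))
    have expand : (∮ z in C(c, R), (z - c) * F z)
        = ∫ θ in (0:ℝ)..(2*Real.pi),
            Complex.I * ((circleMap 0 R θ)^2 * F (circleMap c R θ)) := by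
      rw [circleIntegral]
      apply intervalIntegral.integral_congr
      intro θ _
      simp only [deriv_circleMap, circleMap_sub_center, smul_eq_mul]
      ring
    rw [expand, intervalIntegral.integral_const_mul] at H
    exact (mul_eq_zero.mp H).resolve_left Complex.I_ne_zero
  -- integration by parts setup
  set A : ℝ → ℂ := fun θ => ((v (circleMap c R θ) : ℝ) : ℂ) with hA
  set A' : ℝ → ℂ := fun θ =>
    ((fderiv ℝ v (circleMap c R θ) (circleMap 0 R θ * Complex.I) : ℝ) : ℂ) with hA'
  set W : ℝ → ℂ := fun θ => Complex.exp (-(θ:ℂ) * Complex.I) with hW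
  set W' : ℝ → ℂ := fun θ => Complex.exp (-(θ:ℂ) * Complex.I) * (-Complex.I) with hW'
  have hderivA : ∀ θ : ℝ, HasDerivAt A (A' θ) θ := by
    intro θ
    have h1 := hasDerivAt_circleMap c R θ
    have h2 : DifferentiableAt ℝ v (circleMap c R θ) :=
      ((hv.differentiableOn two_ne_zero) _ (hmemV θ)).differentiableAt
        (hV.mem_nhds (hmemV θ))
    exact (h2.hasFDerivAt.comp_hasDerivAt θ h1).ofReal_comp
  have hderivW : ∀ θ : ℝ, HasDerivAt W (W' θ) θ := by
    intro θ
    have hθ : HasDerivAt (fun t : ℝ => -(t:ℂ) * Complex.I) (-Complex.I) θ := by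
      simpa using ((Complex.ofRealCLM.hasDerivAt (x := θ)).neg.mul_const Complex.I)
    exact hθ.cexp
  have hvC : ContinuousOn v V := hv.continuousOn
  have hAc : Continuous A :=
    Complex.continuous_ofReal.comp (hvC.comp_continuous hcm hmemV)
  have hfdC : ContinuousOn (fderiv ℝ v) V := hv.continuousOn_fderiv_of_isOpen hV one_le_two
  have hA'c : Continuous A' :=
    Complex.continuous_ofReal.comp ((hfdC.comp_continuous hcm hmemV).clm_apply
      ((continuous_circleMap 0 R).mul continuous_const))
  have hWc : Continuous W := by fun_prop
  have hW'c : Continuous W' := by fun_prop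
  have hW2π : W (2*Real.pi) = 1 := by
    have : (-(((2:ℝ)*Real.pi : ℝ):ℂ) * Complex.I) = -(2*(Real.pi:ℂ)*Complex.I) := by
      push_cast; ring
    rw [hW]; simp only [this, Complex.exp_neg, Complex.exp_two_pi_mul_I, inv_one]
  have hW0 : W 0 = 1 := by rw [hW]; simp
  have hparts : (∫ θ in (0:ℝ)..(2*Real.pi), (A' θ * W θ + A θ * W' θ)) = 0 := by
    rw [intervalIntegral.integral_deriv_mul_eq_sub (fun θ _ => hderivA θ)
      (fun θ _ => hderivW θ) (hA'c.intervalIntegrable _ _) (hW'c.intervalIntegrable _ _)]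
    have hA2π : A (2*Real.pi) = A 0 := by
      rw [hA]; simp only
      congr 2
      simpa using (periodic_circleMap c R 0)
    rw [hA2π, hW2π, hW0]
    ring
  have hsplit : (∫ θ in (0:ℝ)..(2*Real.pi), A' θ * W θ)
      = Complex.I * ∫ θ in (0:ℝ)..(2*Real.pi), A θ * W θ := by
    have h1 : (∫ θ in (0:ℝ)..(2*Real.pi), A' θ * W θ)
        + ∫ θ in (0:ℝ)..(2*Real.pi), A θ * W' θ = 0 := by
      rw [← intervalIntegral.integral_add (f := fun θ => A' θ * W θ) (g := fun θ => A θ * W' θ) ((hA'c.mul hWc).intervalIntegrable _ _)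
        ((hAc.mul hW'c).intervalIntegrable _ _)]
      exact hparts
    have h2 : (∫ θ in (0:ℝ)..(2*Real.pi), A θ * W' θ)
        = -Complex.I * ∫ θ in (0:ℝ)..(2*Real.pi), A θ * W θ := by
      rw [← intervalIntegral.integral_const_mul]
      apply intervalIntegral.integral_congr
      intro θ _
      rw [hW', hW]; simp only; ring
    rw [h2] at h1
    linear_combination h1
  -- pointwise algebraic identity
  have key : ∀ θ : ℝ, (2*R:ℂ) * (A' θ * W θ)
      = Complex.I * R^2 * F (circleMap c R θ)
        - Complex.I * (starRingEnd ℂ) ((circleMap 0 R θ)^2 * F (circleMap c R θ)) := by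
    intro θ
    have hsp : fderiv ℝ v (circleMap c R θ) (circleMap 0 R θ * Complex.I)
        = (F (circleMap c R θ) * (circleMap 0 R θ * Complex.I)).re :=
      fcplx_spec v _ _
    set u := circleMap 0 R θ with hu_def
    set a := F (circleMap c R θ) with ha_def
    have hu : u * W θ = (R:ℂ) := by
      rw [hW]; simp only
      rw [hu_def, circleMap_zero, mul_assoc, ← Complex.exp_add]
      ring_nf
      simp
    have hcu : (starRingEnd ℂ) u = (R:ℂ) * W θ := by
      rw [hW]; simp only
      rw [hu_def, circleMap_zero, map_mul, Complex.conj_ofReal, ← Complex.exp_conj]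
      congr 1
      simp
    have hre : ((a * (u * Complex.I)).re : ℂ)
        = (a * (u * Complex.I) + (starRingEnd ℂ) (a * (u * Complex.I))) / 2 := by
      rw [Complex.add_conj]; push_cast; ring
    rw [hA']; simp only
    rw [hsp, hre, map_mul, map_mul, map_mul, Complex.conj_I, map_pow, hcu]
    linear_combination ((R:ℂ) * a * Complex.I) * hu
  -- compute the integral of A * W
  have hucont : Continuous fun θ => (circleMap 0 R θ)^2 * F (circleMap c R θ) :=
    ((continuous_circleMap 0 R).pow 2).mul hFc
  have hi1 : IntervalIntegrable (fun θ => Complex.I * (R:ℂ)^2 * F (circleMap c R θ))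
      volume 0 (2*Real.pi) := (continuous_const.mul hFc).intervalIntegrable _ _
  have hi2 : IntervalIntegrable (fun θ =>
      Complex.I * (starRingEnd ℂ) ((circleMap 0 R θ)^2 * F (circleMap c R θ)))
      volume 0 (2*Real.pi) :=
    (continuous_const.mul (Complex.continuous_conj.comp hucont)).intervalIntegrable _ _
  have e2 : (∫ θ in (0:ℝ)..(2*Real.pi), (2*R:ℂ) * (A' θ * W θ))
      = Complex.I * (R:ℂ)^2 * ((2*Real.pi:ℂ) * F c) := by
    rw [intervalIntegral.integral_congr (fun θ _ => key θ)]
    rw [intervalIntegral.integral_sub hi1 hi2, intervalIntegral.integral_const_mul,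
      intervalIntegral.integral_const_mul, hmean, my_intervalIntegral_conj, hzero]
    simp
  have e1 : (∫ θ in (0:ℝ)..(2*Real.pi), (2*R:ℂ) * (A' θ * W θ))
      = (2*R:ℂ) * (Complex.I * ∫ θ in (0:ℝ)..(2*Real.pi), A θ * W θ) := by
    rw [intervalIntegral.integral_const_mul, hsplit]
  have hcomb : (2*R:ℂ) * (Complex.I * ∫ θ in (0:ℝ)..(2*Real.pi), A θ * W θ)
      = Complex.I * (R:ℂ)^2 * ((2*Real.pi:ℂ) * F c) := e1.symm.trans e2
  have h2RI : ((2*R:ℂ) * Complex.I) ≠ 0 := by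
    simp [Complex.I_ne_zero, hR.ne', Complex.ofReal_ne_zero]
  have hAW : (∫ θ in (0:ℝ)..(2*Real.pi), A θ * W θ) = (Real.pi:ℂ) * (R:ℂ) * F c := by
    apply mul_left_cancel₀ h2RI
    linear_combination hcomb
  -- final bound
  have hMnonneg : 0 ≤ M := le_trans (abs_nonneg _) (hM c (mem_closedBall_self hR.le))
  have hbound : ‖∫ θ in (0:ℝ)..(2*Real.pi), A θ * W θ‖ ≤ M * |2*Real.pi - 0| := by
    apply intervalIntegral.norm_integral_le_of_norm_le_const
    intro θ _
    have h2 : ‖W θ‖ = 1 := by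
      rw [hW]; simp [Complex.norm_exp]
    rw [norm_mul, h2, mul_one, hA]
    simpa using hM _ (hmemB θ)
  rw [hAW] at hbound
  have hnorm : ‖((Real.pi:ℂ) * (R:ℂ) * F c)‖
      = Real.pi * R * ‖F c‖ := by
    simp [Complex.norm_real, abs_of_pos pi_pos, abs_of_pos hR]
  rw [hnorm] at hbound
  have h2π : |2*Real.pi - 0| = 2*Real.pi := by
    rw [sub_zero]; exact abs_of_pos (by positivity)
  rw [h2π] at hbound
  rw [le_div_iff₀ hR]
  nlinarith [norm_nonneg (F c)]



lemma harmonic_gradient_bound {U : Set (EuclideanSpace ℝ (Fin 2))} (hU : IsOpen U)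
    {u : EuclideanSpace ℝ (Fin 2) → ℝ} (hu : HarmonicOnR u U)
    {y : EuclideanSpace ℝ (Fin 2)} {ρ M : ℝ} (hρ : 0 < ρ)
    (hsub : closedBall y ρ ⊆ U) (hM : ∀ z ∈ closedBall y ρ, |u z| ≤ M) :
    ‖gradient u y‖ ≤ 2 * M / ρ := by
  set ι := Complex.orthonormalBasisOneI.repr with hιdef
  set iso := ι.toContinuousLinearEquiv with hisodef
  have hcoe : ∀ z : ℂ, iso z = ι z := fun z => rfl
  have h1 : ι 1 = EuclideanSpace.single 0 1 := by
    rw [hιdef]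
    ext j
    fin_cases j <;>
      simp [Complex.orthonormalBasisOneI_repr_apply, EuclideanSpace.single_apply]
  have hI : ι Complex.I = EuclideanSpace.single 1 1 := by
    rw [hιdef]
    ext j
    fin_cases j <;>
      simp [Complex.orthonormalBasisOneI_repr_apply, EuclideanSpace.single_apply]
  set V : Set ℂ := ⇑iso ⁻¹' U with hVdef
  set v : ℂ → ℝ := u ∘ ⇑iso with hvdef
  have hVopen : IsOpen V := hU.preimage iso.continuous
  have hv : ContDiffOn ℝ 2 v V :=
    hu.1.comp ((iso : ℂ →L[ℝ] EuclideanSpace ℝ (Fin 2)).contDiff.contDiffOn) (Set.mapsTo_preimage _ _)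
  have hfd : ∀ z : ℂ, fderiv ℝ v z
      = (fderiv ℝ u (iso z)).comp (iso : ℂ →L[ℝ] EuclideanSpace ℝ (Fin 2)) := fun z =>
    iso.comp_right_fderiv
  have hv1 : (fun w => fderiv ℝ v w 1)
      = (fun p => fderiv ℝ u p (EuclideanSpace.single 0 1)) ∘ ⇑iso := by
    funext w
    rw [hfd w]
    simp only [ContinuousLinearMap.coe_comp', Function.comp_apply,
      ContinuousLinearEquiv.coe_coe]
    simp only [hcoe]; rw [h1]
  have hvI : (fun w => fderiv ℝ v w Complex.I)
      = (fun p => fderiv ℝ u p (EuclideanSpace.single 1 1)) ∘ ⇑iso := by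
    funext w
    rw [hfd w]
    simp only [ContinuousLinearMap.coe_comp', Function.comp_apply,
      ContinuousLinearEquiv.coe_coe]
    simp only [hcoe]; rw [hI]
  have hlapv : ∀ z ∈ V, fderiv ℝ (fun w => fderiv ℝ v w 1) z 1
      + fderiv ℝ (fun w => fderiv ℝ v w Complex.I) z Complex.I = 0 := by
    intro z hz
    rw [hv1, hvI, iso.comp_right_fderiv, iso.comp_right_fderiv]
    simp only [ContinuousLinearMap.coe_comp', Function.comp_apply,
      ContinuousLinearEquiv.coe_coe]
    simp only [hcoe]; rw [h1, hI]
    have hl := hu.2 (iso z) hz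
    rw [laplacianR, Fin.sum_univ_two] at hl
    exact hl
  set c : ℂ := ι.symm y with hcdef
  have hcy : ι c = y := ι.apply_symm_apply y
  have hsubV : closedBall c ρ ⊆ V := by
    intro z hz
    have : dist (ι z) y = dist z c := by rw [← hcy, ι.dist_map]
    exact hsub (by simpa [mem_closedBall, hcoe, this] using hz)
  have hMv : ∀ z ∈ closedBall c ρ, |v z| ≤ M := by
    intro z hz
    have : dist (ι z) y = dist z c := by rw [← hcy, ι.dist_map]
    exact hM (ι z) (by simpa [mem_closedBall, this] using hz)
  have hbd := fcplx_center_bound hVopen hv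
    (fun z hz => fcplx_holo hVopen hv hlapv hz) hρ hsubV hMv
  have hM0 : 0 ≤ M := le_trans (abs_nonneg _) (hM y (mem_closedBall_self hρ.le))
  have hgrad : ‖gradient u y‖ = ‖fderiv ℝ u y‖ := by
    rw [gradient]
    exact LinearIsometryEquiv.norm_map _ _
  rw [hgrad]
  apply ContinuousLinearMap.opNorm_le_bound _ (by positivity)
  intro w
  have hw : fderiv ℝ u y w = fderiv ℝ v c (ι.symm w) := by
    rw [hfd c]
    simp only [ContinuousLinearMap.coe_comp', Function.comp_apply,
      ContinuousLinearEquiv.coe_coe]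
    simp only [hcoe]; rw [ι.apply_symm_apply, ι.apply_symm_apply]
  rw [hw, fcplx_spec]
  calc |(fcplx v c * (ι.symm w : ℂ)).re| ≤ ‖fcplx v c * (ι.symm w)‖ :=
        Complex.abs_re_le_norm _
    _ = ‖fcplx v c‖ * ‖(ι.symm w : ℂ)‖ := by rw [norm_mul]
    _ ≤ (2 * M / ρ) * ‖(ι.symm w : ℂ)‖ := by
        apply mul_le_mul_of_nonneg_right hbd (norm_nonneg _)
    _ = (2 * M / ρ) * ‖w‖ := by rw [ι.symm.norm_map]


lemma ball_infDist_frontier_subset {E : Type*} [NormedAddCommGroup E] [NormedSpace ℝ E]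
    {Ω : Set E} (hΩ : IsOpen Ω) {y : E} (hy : y ∈ Ω) :
    Metric.ball y (Metric.infDist y (frontier Ω)) ⊆ Ω := by
  set d := Metric.infDist y (frontier Ω) with hd
  have hdisj : Disjoint (frontier Ω) (Metric.ball y d) := by
    rw [Set.disjoint_left]
    intro w hw hwb
    rw [Metric.mem_ball] at hwb
    have h1 : d ≤ dist y w := Metric.infDist_le_dist_of_mem hw
    rw [dist_comm] at h1
    linarith
  intro z hz
  have hdpos : 0 < d := lt_of_le_of_lt dist_nonneg (Metric.mem_ball.1 hz)
  haveI : PreconnectedSpace (Metric.ball y d) :=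
    Subtype.preconnectedSpace (convex_ball y d).isPreconnected
  have hclopen := isClopen_preimage_val hΩ hdisj
  have hne : ((Metric.ball y d) ↓∩ Ω).Nonempty := ⟨⟨y, Metric.mem_ball_self hdpos⟩, hy⟩
  have heq := hclopen.eq_univ hne
  have hzin : (⟨z, hz⟩ : ↥(Metric.ball y d)) ∈ ((Metric.ball y d) ↓∩ Ω) := by
    rw [heq]; trivial
  exact hzin

lemma abs_log_close {a b : ℝ} (hb : 0 < b) (h1 : 7*b/8 ≤ a) (h2 : a ≤ 9*b/8) :
    |Real.log a| ≤ 1 + |Real.log b| := by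
  have ha : 0 < a := lt_of_lt_of_le (by positivity) h1
  have hq : Real.log (a/b) = Real.log a - Real.log b := Real.log_div ha.ne' hb.ne'
  have habs : |Real.log (a/b)| ≤ 1 := by
    rw [abs_le]
    constructor
    · have hba : b/a ≤ 8/7 := by rw [div_le_div_iff₀ ha (by norm_num)]; linarith
      have hlog := Real.log_le_sub_one_of_pos (show 0 < b/a by positivity)
      have hinv : Real.log (a/b) = - Real.log (b/a) := by
        rw [← Real.log_inv, inv_div]
      rw [hinv]
      linarith
    · have hab : a/b ≤ 9/8 := by rw [div_le_div_iff₀ hb (by norm_num)]; linarith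
      have hlog := Real.log_le_sub_one_of_pos (show 0 < a/b by positivity)
      linarith
  have : Real.log a = Real.log b + Real.log (a/b) := by rw [hq]; ring
  rw [this]
  calc |Real.log b + Real.log (a/b)| ≤ |Real.log b| + |Real.log (a/b)| := abs_add_le _ _
    _ ≤ 1 + |Real.log b| := by linarith

end helpers

theorem green_function_gradient_bound_dim_two
    (Ω : Set (EuclideanSpace ℝ (Fin 2)))
    (hΩo : IsOpen Ω) (hΩb : Bornology.IsBounded Ω) (hΩne : Ω.Nonempty)
    (C₀ : ℝ) (hC₀ : 0 < C₀)
    (G : EuclideanSpace ℝ (Fin 2) → EuclideanSpace ℝ (Fin 2) → ℝ)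
    (hharm : ∀ x ∈ Ω, HarmonicOnR (fun y => G x y) (Ω \ {x}))
    (hb1 : ∀ x ∈ Ω, ∀ y ∈ Ω, x ≠ y →
      |G x y| ≤ |Real.log ‖x - y‖| + |Real.log (diam Ω)|)
    (hb2 : ∀ x ∈ Ω, ∀ y ∈ Ω, x ≠ y →
      |G x y| ≤ C₀ * (1 + |Real.log ‖x - y‖|) * infDist y (frontier Ω) / ‖x - y‖) :
    ∃ C > (0 : ℝ), ∀ x ∈ Ω, ∀ y ∈ Ω, x ≠ y →
      ‖gradient (fun y' => G x y') y‖ ≤ C * (1 + |Real.log ‖x - y‖|) / ‖x - y‖ := by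
  have hfront : (frontier Ω).Nonempty := by
    rw [nonempty_frontier_iff]
    refine ⟨hΩne, fun h => ?_⟩
    exact NormedSpace.unbounded_univ ℝ (EuclideanSpace ℝ (Fin 2)) (h ▸ hΩb)
  refine ⟨16 * (1 + |Real.log (diam Ω)|) + 14 * C₀, by positivity, ?_⟩
  intro x hx y hy hxy
  set r := ‖x - y‖ with hrdef
  have hr : 0 < r := by rw [hrdef]; exact norm_sub_pos_iff.2 hxy
  have hdist_xy : dist x y = r := by rw [dist_eq_norm]
  have hUopen : IsOpen (Ω \ {x}) := hΩo.sdiff isClosed_singleton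
  have hynx : y ∉ frontier Ω := by
    intro h
    rw [frontier, hΩo.interior_eq] at h
    exact h.2 hy
  set d := infDist y (frontier Ω) with hddef
  have hd : 0 < d := by
    rw [hddef]
    exact (isClosed_frontier.notMem_iff_infDist_pos hfront).1 hynx
  have hball : ball y d ⊆ Ω := ball_infDist_frontier_subset hΩo hy
  -- generic facts for z in a small closed ball around y
  have key : ∀ ρ : ℝ, 0 < ρ → ρ ≤ r/8 → ρ < d →
      closedBall y ρ ⊆ Ω \ {x} ∧
      (∀ z ∈ closedBall y ρ, 7*r/8 ≤ ‖x - z‖ ∧ ‖x - z‖ ≤ 9*r/8 ∧ x ≠ z ∧ z ∈ Ω) := by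
    intro ρ hρ hρr hρd
    have hmem : ∀ z ∈ closedBall y ρ, 7*r/8 ≤ ‖x - z‖ ∧ ‖x - z‖ ≤ 9*r/8 ∧ x ≠ z ∧ z ∈ Ω := by
      intro z hz
      rw [mem_closedBall] at hz
      have hzΩ : z ∈ Ω := hball (by rw [mem_ball]; linarith)
      have ht1 : dist x y ≤ dist x z + dist z y := dist_triangle x z y
      have ht2 : dist x z ≤ dist x y + dist y z := dist_triangle x y z
      have hzy : dist z y = dist y z := dist_comm z y
      have hlow : 7*r/8 ≤ ‖x - z‖ := by
        rw [← dist_eq_norm]; linarith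
      have hup : ‖x - z‖ ≤ 9*r/8 := by
        rw [← dist_eq_norm]; linarith
      have hne : x ≠ z := by
        intro h
        rw [← h] at hlow
        simp only [sub_self, norm_zero] at hlow
        linarith
      exact ⟨hlow, hup, hne, hzΩ⟩
    refine ⟨fun z hz => ⟨(hmem z hz).2.2.2, ?_⟩, hmem⟩
    simp only [Set.mem_singleton_iff]
    exact fun h => (hmem z hz).2.2.1 h.symm
  rcases le_or_gt (r/4) d with hcase | hcase
  · -- interior case : use the logarithmic bound hb1
    have hρ : 0 < r/8 := by positivity
    obtain ⟨hsubU, hmem⟩ := key (r/8) hρ le_rfl (by linarith)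
    set M := (1 + |Real.log (diam Ω)|) * (1 + |Real.log r|) with hMdef
    have hMb : ∀ z ∈ closedBall y (r/8), |G x z| ≤ M := by
      intro z hz
      obtain ⟨hlow, hup, hne, hzΩ⟩ := hmem z hz
      have hlog : |Real.log ‖x - z‖| ≤ 1 + |Real.log r| :=
        abs_log_close hr hlow hup
      have hG := hb1 x hx z hzΩ hne
      have hD : (0:ℝ) ≤ |Real.log (diam Ω)| := abs_nonneg _
      have hL : (0:ℝ) ≤ |Real.log r| := abs_nonneg _
      rw [hMdef]
      nlinarith
    have hgb := harmonic_gradient_bound hUopen (hharm x hx) hρ hsubU hMb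
    have hM0 : 0 ≤ M := by
      rw [hMdef]; positivity
    calc ‖gradient (fun y' => G x y') y‖ ≤ 2 * M / (r/8) := hgb
      _ = 16 * M / r := by field_simp; ring
      _ ≤ (16 * (1 + |Real.log (diam Ω)|) + 14 * C₀) * (1 + |Real.log r|) / r := by
          rw [hMdef, div_le_div_iff₀ hr hr]
          nlinarith [abs_nonneg (Real.log (diam Ω)), abs_nonneg (Real.log r),
            mul_pos (mul_pos hC₀ (show (0:ℝ) < 1 + |Real.log r| by positivity)) hr]
  · -- boundary case : use the distance bound hb2
    have hρ : 0 < d/2 := by positivity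
    obtain ⟨hsubU, hmem⟩ := key (d/2) hρ (by linarith) (by linarith)
    set M := (24/7) * C₀ * (1 + |Real.log r|) * d / r with hMdef
    have hL : (0:ℝ) ≤ |Real.log r| := abs_nonneg _
    have hMb : ∀ z ∈ closedBall y (d/2), |G x z| ≤ M := by
      intro z hz
      obtain ⟨hlow, hup, hne, hzΩ⟩ := hmem z hz
      have hxzpos : (0:ℝ) < ‖x - z‖ := by linarith
      have hlog : |Real.log ‖x - z‖| ≤ 1 + |Real.log r| :=
        abs_log_close hr hlow hup
      have hG := hb2 x hx z hzΩ hne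
      have hδ : infDist z (frontier Ω) ≤ 3*d/2 := by
        have h1 := infDist_le_infDist_add_dist (x := z) (y := y) (s := frontier Ω)
        rw [mem_closedBall] at hz
        rw [← hddef] at h1
        linarith
      have hδ0 : 0 ≤ infDist z (frontier Ω) := infDist_nonneg
      have hstep1 : C₀ * (1 + |Real.log ‖x - z‖|) * infDist z (frontier Ω)
          ≤ C₀ * (2 * (1 + |Real.log r|)) * (3*d/2) := by
        have e1 : 1 + |Real.log ‖x - z‖| ≤ 2 * (1 + |Real.log r|) := by
          have := abs_nonneg (Real.log ‖x - z‖); linarith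
        have e2 : (1 + |Real.log ‖x - z‖|) * infDist z (frontier Ω)
            ≤ (2 * (1 + |Real.log r|)) * (3*d/2) :=
          mul_le_mul e1 hδ hδ0 (by positivity)
        calc C₀ * (1 + |Real.log ‖x - z‖|) * infDist z (frontier Ω)
            = C₀ * ((1 + |Real.log ‖x - z‖|) * infDist z (frontier Ω)) := by ring
          _ ≤ C₀ * ((2 * (1 + |Real.log r|)) * (3*d/2)) := mul_le_mul_of_nonneg_left e2 hC₀.le
          _ = C₀ * (2 * (1 + |Real.log r|)) * (3*d/2) := by ring
      have hstep2 : (1:ℝ)/‖x - z‖ ≤ 8/(7*r) := by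
        rw [div_le_div_iff₀ hxzpos (by positivity)]
        linarith
      have hfinal : C₀ * (1 + |Real.log ‖x - z‖|) * infDist z (frontier Ω) / ‖x - z‖ ≤ M := by
        have h0 : 0 ≤ C₀ * (1 + |Real.log ‖x - z‖|) * infDist z (frontier Ω) := by positivity
        calc C₀ * (1 + |Real.log ‖x - z‖|) * infDist z (frontier Ω) / ‖x - z‖
            = (C₀ * (1 + |Real.log ‖x - z‖|) * infDist z (frontier Ω)) * (1/‖x - z‖) := by
              ring
          _ ≤ (C₀ * (2 * (1 + |Real.log r|)) * (3*d/2)) * (8/(7*r)) := by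
              apply mul_le_mul hstep1 hstep2 (by positivity) (by positivity)
          _ = M := by rw [hMdef]; field_simp; ring
      exact le_trans hG hfinal
    have hgb := harmonic_gradient_bound hUopen (hharm x hx) hρ hsubU hMb
    calc ‖gradient (fun y' => G x y') y‖ ≤ 2 * M / (d/2) := hgb
      _ = (96/7) * C₀ * (1 + |Real.log r|) / r := by
          rw [hMdef]; field_simp; ring
      _ ≤ (16 * (1 + |Real.log (diam Ω)|) + 14 * C₀) * (1 + |Real.log r|) / r := by
          rw [div_le_div_iff₀ hr hr]
          nlinarith [abs_nonneg (Real.log (diam Ω)), abs_nonneg (Real.log r),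
            mul_pos (mul_pos hC₀ (show (0:ℝ) < 1 + |Real.log r| by positivity)) hr]
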